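/- Let A and B be real symmetric n×n matrices and let z ∈ ℂ with Im(z) > 0. Then |(1/n)·Tr((A − z·I_n)^{-1} − (B − z·I_n)^{-1})| ≤ ‖A − B‖_F/(√n·Im(z)²), where the inverses are taken over ℂ (they exist since A, B are symmetric and z is non-real). -/

import Mathlib

open MeasureTheory ProbabilityTheory Filter
open scoped NNReal

/-- Frobenius norm of a real matrix. -/
noncomputable def frobNorm {m p : Type*} [Fintype m] [Fintype p] (M : Matrix m p ℝ) : ℝ :=
  Real.sqrt (∑ i, ∑ j, (M i j) ^ 2)

namespace Stmt10Aux

open Matrix Complex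

variable {n : ℕ} {z : ℂ}

noncomputable def ev (v : Fin n → ℂ) : EuclideanSpace ℂ (Fin n) :=
  (WithLp.equiv 2 (Fin n → ℂ)).symm v

lemma ev_norm (v : Fin n → ℂ) : ‖ev v‖ = Real.sqrt (∑ i, ‖v i‖ ^ 2) := by
  rw [EuclideanSpace.norm_eq]; rfl

lemma key1 (hz : 0 < z.im) (H : Matrix (Fin n) (Fin n) ℂ) (hH : H.IsHermitian)
    (v : Fin n → ℂ) : z.im * ‖ev v‖ ≤ ‖ev ((H - z • 1) *ᵥ v)‖ := by
  have hT : (Matrix.toEuclideanLin H).IsSymmetric :=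
    Matrix.isHermitian_iff_isSymmetric.mp hH
  set T := Matrix.toEuclideanLin H with hTdef
  have hmv : (H - z • 1) *ᵥ v = H *ᵥ v - z • v := by
    rw [Matrix.sub_mulVec, Matrix.smul_mulVec, Matrix.one_mulVec]
  have hev : ev ((H - z • 1) *ᵥ v) = T (ev v) - z • (ev v) := by
    rw [hmv]; rfl
  set x := ev v with hx
  set w := T x - z • x with hw
  have h1 : (inner ℂ x (T x)) = (starRingEnd ℂ) (inner ℂ x (T x)) := by
    rw [inner_conj_symm]
    exact (hT x x).symm
  have h1' : (inner ℂ x (T x)).im = 0 := by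
    have := Complex.conj_eq_iff_im.mp h1.symm
    exact this
  have h2 : (inner ℂ x x) = ((‖x‖ : ℂ)) ^ 2 := inner_self_eq_norm_sq_to_K x
  have hiw : (inner ℂ x w) = inner ℂ x (T x) - z * ((‖x‖ : ℂ)) ^ 2 := by
    rw [hw, inner_sub_right, inner_smul_right, h2]
  have him : (inner ℂ x w).im = - (z.im * ‖x‖ ^ 2) := by
    rw [hiw]
    have : ((‖x‖ : ℂ)) ^ 2 = ((‖x‖ ^ 2 : ℝ) : ℂ) := by push_cast; ring
    rw [this, Complex.sub_im, h1', zero_sub, Complex.mul_im, Complex.ofReal_im,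
      Complex.ofReal_re, mul_zero, zero_add]
  have habs : z.im * ‖x‖ ^ 2 ≤ ‖(inner ℂ x w)‖ := by
    calc z.im * ‖x‖ ^ 2 = |(inner ℂ x w).im| := by
          rw [him, abs_neg]; exact (_root_.abs_of_nonneg (by positivity)).symm
      _ ≤ ‖(inner ℂ x w)‖ := Complex.abs_im_le_norm _
      _ = ‖(inner ℂ x w)‖ := rfl
  have hcs : ‖(inner ℂ x w)‖ ≤ ‖x‖ * ‖w‖ := norm_inner_le_norm x w
  rw [hev]
  rcases eq_or_lt_of_le (norm_nonneg x) with h0 | h0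
  · rw [← h0, mul_zero]; exact norm_nonneg w
  · have : z.im * ‖x‖ * ‖x‖ ≤ ‖w‖ * ‖x‖ := by
      calc z.im * ‖x‖ * ‖x‖ = z.im * ‖x‖ ^ 2 := by ring
        _ ≤ ‖x‖ * ‖w‖ := habs.trans hcs
        _ = ‖w‖ * ‖x‖ := by ring
    exact le_of_mul_le_mul_right this h0

lemma ev_eq_zero {v : Fin n → ℂ} (h : ‖ev v‖ = 0) : v = 0 := by
  have : ev v = 0 := norm_eq_zero.mp h
  funext i
  have : ev v i = 0 := by rw [this]; rfl
  exact this

lemma key2 (hz : 0 < z.im) (H : Matrix (Fin n) (Fin n) ℂ) (hH : H.IsHermitian) :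
    IsUnit (H - z • 1) := by
  rw [← Matrix.mulVec_injective_iff_isUnit]
  intro u v huv
  have hsub : (H - z • 1) *ᵥ (u - v) = 0 := by
    rw [Matrix.mulVec_sub, huv, sub_self]
  have h1 := key1 hz H hH (u - v)
  rw [hsub] at h1
  have h0 : ‖ev (0 : Fin n → ℂ)‖ = 0 := by
    rw [ev_norm]; simp
  rw [h0] at h1
  have : ‖ev (u - v)‖ = 0 :=
    le_antisymm (by nlinarith [norm_nonneg (ev (u - v))]) (norm_nonneg _)
  have := ev_eq_zero this
  exact sub_eq_zero.mp this

lemma key3 (hz : 0 < z.im) (H : Matrix (Fin n) (Fin n) ℂ) (hH : H.IsHermitian)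
    (w : Fin n → ℂ) : ‖ev ((H - z • 1)⁻¹ *ᵥ w)‖ ≤ z.im⁻¹ * ‖ev w‖ := by
  have hu := key2 hz H hH
  have hdet : IsUnit (H - z • 1).det := (Matrix.isUnit_iff_isUnit_det _).mp hu
  set v := (H - z • 1)⁻¹ *ᵥ w with hv
  have hMv : (H - z • 1) *ᵥ v = w := by
    rw [hv, Matrix.mulVec_mulVec, Matrix.mul_nonsing_inv _ hdet, Matrix.one_mulVec]
  have h1 := key1 hz H hH v
  rw [hMv] at h1
  rw [inv_mul_eq_div, le_div_iff₀ hz]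
  linarith

lemma sq_bound (hz : 0 < z.im) (H : Matrix (Fin n) (Fin n) ℂ) (hH : H.IsHermitian)
    (w : Fin n → ℂ) :
    ∑ i, ‖((H - z • 1)⁻¹ *ᵥ w) i‖ ^ 2 ≤ z.im⁻¹ ^ 2 * ∑ i, ‖w i‖ ^ 2 := by
  have h := key3 hz H hH w
  have h2 : ‖ev ((H - z • 1)⁻¹ *ᵥ w)‖ ^ 2 ≤ (z.im⁻¹ * ‖ev w‖) ^ 2 :=
    pow_le_pow_left₀ (norm_nonneg _) h 2
  rw [ev_norm, ev_norm] at h2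
  rw [Real.sq_sqrt (by positivity), mul_pow, Real.sq_sqrt (by positivity)] at h2
  exact h2

lemma trace_abs_bound (P C : Matrix (Fin n) (Fin n) ℂ) :
    ‖Matrix.trace (P * C)‖ ≤
      Real.sqrt (∑ i, ∑ j, ‖P i j‖ ^ 2) * Real.sqrt (∑ i, ∑ j, ‖C i j‖ ^ 2) := by
  set x : EuclideanSpace ℂ (Fin n × Fin n) :=
    (WithLp.equiv 2 (Fin n × Fin n → ℂ)).symm (fun p => (starRingEnd ℂ) (P p.1 p.2)) with hxd
  set y : EuclideanSpace ℂ (Fin n × Fin n) :=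
    (WithLp.equiv 2 (Fin n × Fin n → ℂ)).symm (fun p => C p.2 p.1) with hyd
  have hxy : (inner ℂ x y) = Matrix.trace (P * C) := by
    rw [PiLp.inner_apply]
    simp only [hxd, hyd, WithLp.equiv_symm_apply, PiLp.toLp_apply, RCLike.inner_apply', RingHom.id_apply,
      starRingEnd_self_apply, star_star]
    rw [Matrix.trace]
    simp only [Matrix.diag_apply, Matrix.mul_apply]
    rw [Fintype.sum_prod_type]
  have hx : ‖x‖ = Real.sqrt (∑ i, ∑ j, ‖P i j‖ ^ 2) := by
    rw [EuclideanSpace.norm_eq]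
    congr 1
    rw [Fintype.sum_prod_type]
    apply Finset.sum_congr rfl; intro i _
    apply Finset.sum_congr rfl; intro j _
    simp [hxd, WithLp.equiv_symm_apply, PiLp.toLp_apply]
  have hy : ‖y‖ = Real.sqrt (∑ i, ∑ j, ‖C i j‖ ^ 2) := by
    rw [EuclideanSpace.norm_eq]
    congr 1
    rw [Fintype.sum_prod_type, Finset.sum_comm]
    apply Finset.sum_congr rfl; intro i _
    apply Finset.sum_congr rfl; intro j _
    simp [hyd, WithLp.equiv_symm_apply, PiLp.toLp_apply]
  calc ‖Matrix.trace (P * C)‖ = ‖(inner ℂ x y)‖ := by rw [hxy]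
    _ ≤ ‖x‖ * ‖y‖ := norm_inner_le_norm x y
    _ = _ := by rw [hx, hy]

lemma prod_sq_bound (hz : 0 < z.im) (H : Matrix (Fin n) (Fin n) ℂ) (hH : H.IsHermitian)
    (Y : Matrix (Fin n) (Fin n) ℂ) :
    ∑ i, ∑ j, ‖((H - z • 1)⁻¹ * Y) i j‖ ^ 2 ≤ z.im⁻¹ ^ 2 * ∑ i, ∑ j, ‖Y i j‖ ^ 2 := by
  calc ∑ i, ∑ j, ‖((H - z • 1)⁻¹ * Y) i j‖ ^ 2
      = ∑ j, ∑ i, ‖((H - z • 1)⁻¹ * Y) i j‖ ^ 2 := Finset.sum_comm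
    _ ≤ ∑ j, z.im⁻¹ ^ 2 * ∑ i, ‖Y i j‖ ^ 2 := by
        apply Finset.sum_le_sum; intro j _
        have hcol : ∀ i, ((H - z • 1)⁻¹ * Y) i j = ((H - z • 1)⁻¹ *ᵥ (fun k => Y k j)) i := by
          intro i; simp [Matrix.mul_apply, Matrix.mulVec, dotProduct]
        simp_rw [hcol]
        exact sq_bound hz H hH (fun k => Y k j)
    _ = z.im⁻¹ ^ 2 * ∑ j, ∑ i, ‖Y i j‖ ^ 2 := (Finset.mul_sum _ _ _).symm
    _ = z.im⁻¹ ^ 2 * ∑ i, ∑ j, ‖Y i j‖ ^ 2 := by rw [Finset.sum_comm]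

lemma res_sq_bound (hz : 0 < z.im) (H : Matrix (Fin n) (Fin n) ℂ) (hH : H.IsHermitian) :
    ∑ i, ∑ j, ‖(H - z • 1)⁻¹ i j‖ ^ 2 ≤ n * z.im⁻¹ ^ 2 := by
  calc ∑ i, ∑ j, ‖(H - z • 1)⁻¹ i j‖ ^ 2
      = ∑ j, ∑ i, ‖(H - z • 1)⁻¹ i j‖ ^ 2 := Finset.sum_comm
    _ ≤ ∑ _j : Fin n, z.im⁻¹ ^ 2 * 1 := by
        apply Finset.sum_le_sum; intro j _
        have hcol : ∀ i, (H - z • 1)⁻¹ i j = ((H - z • 1)⁻¹ *ᵥ Pi.single j (1 : ℂ)) i := by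
          intro i
          simp [Matrix.mulVec_single]
        have hone : (∑ k, ‖(Pi.single j 1 : Fin n → ℂ) k‖ ^ 2) = 1 := by
          have hterm : ∀ k : Fin n, ‖(Pi.single j 1 : Fin n → ℂ) k‖ ^ 2
              = if k = j then (1 : ℝ) else 0 := by
            intro k; by_cases h : k = j <;> simp [Pi.single_apply, h]
          rw [Finset.sum_congr rfl fun k _ => hterm k]
          simp
        simp_rw [hcol]
        have := sq_bound hz H hH (Pi.single j (1 : ℂ))
        rw [hone] at this
        exact this
    _ = n * z.im⁻¹ ^ 2 := by simp [mul_comm]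

lemma herm_of_symm (A : Matrix (Fin n) (Fin n) ℝ) (hA : A.IsSymm) :
    (A.map (fun x => (x : ℂ))).IsHermitian := by
  refine Matrix.ext fun i j => ?_
  simp [Matrix.conjTranspose_apply, Matrix.map_apply, Complex.conj_ofReal, hA.apply i j]

end Stmt10Aux

theorem stmt_10 (n : ℕ) (A B : Matrix (Fin n) (Fin n) ℝ)
    (hA : A.IsSymm) (hB : B.IsSymm) (z : ℂ) (hz : 0 < z.im) :
    ‖((n : ℂ)⁻¹ *
        Matrix.trace ((A.map (fun x => (x : ℂ)) - z • 1)⁻¹ -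
          (B.map (fun x => (x : ℂ)) - z • 1)⁻¹))‖
      ≤ frobNorm (A - B) / (Real.sqrt n * z.im ^ 2) := by
  classical
  by_cases hn : n = 0
  · subst hn
    simp only [Nat.cast_zero, inv_zero, zero_mul, norm_zero, Real.sqrt_zero, div_zero]
    exact le_refl 0
  have hn' : (0 : ℝ) < n := by exact_mod_cast Nat.pos_of_ne_zero hn
  set Aℂ := A.map (fun x => (x : ℂ)) with hAd
  set Bℂ := B.map (fun x => (x : ℂ)) with hBd
  have hHA : Aℂ.IsHermitian := Stmt10Aux.herm_of_symm A hA
  have hHB : Bℂ.IsHermitian := Stmt10Aux.herm_of_symm B hB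
  have hdA : IsUnit (Aℂ - z • 1).det :=
    (Matrix.isUnit_iff_isUnit_det _).mp (Stmt10Aux.key2 hz _ hHA)
  have hdB : IsUnit (Bℂ - z • 1).det :=
    (Matrix.isUnit_iff_isUnit_det _).mp (Stmt10Aux.key2 hz _ hHB)
  have hres : (Aℂ - z • 1)⁻¹ - (Bℂ - z • 1)⁻¹
      = (Aℂ - z • 1)⁻¹ * (Bℂ - Aℂ) * (Bℂ - z • 1)⁻¹ := by
    have hC : Bℂ - Aℂ = (Bℂ - z • 1) - (Aℂ - z • 1) :=
      (sub_sub_sub_cancel_right _ _ _).symm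
    rw [hC, Matrix.mul_sub, Matrix.sub_mul,
      Matrix.mul_assoc _ (Bℂ - z • 1) ((Bℂ - z • 1)⁻¹),
      Matrix.mul_nonsing_inv _ hdB, Matrix.mul_one,
      Matrix.nonsing_inv_mul _ hdA, Matrix.one_mul]
  have htrace : Matrix.trace ((Aℂ - z • 1)⁻¹ - (Bℂ - z • 1)⁻¹)
      = Matrix.trace (((Bℂ - z • 1)⁻¹ * (Aℂ - z • 1)⁻¹) * (Bℂ - Aℂ)) := by
    rw [hres, Matrix.trace_mul_cycle]
  have hCnorm : Real.sqrt (∑ i, ∑ j, ‖(Bℂ - Aℂ) i j‖ ^ 2) = frobNorm (A - B) := by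
    rw [frobNorm]
    congr 1
    apply Finset.sum_congr rfl; intro i _
    apply Finset.sum_congr rfl; intro j _
    rw [Matrix.sub_apply, hAd, hBd, Matrix.map_apply, Matrix.map_apply,
      ← Complex.ofReal_sub, Complex.norm_real, Matrix.sub_apply]
    rw [Real.norm_eq_abs, sq_abs]
    ring
  have hSP : ∑ i, ∑ j, ‖((Bℂ - z • 1)⁻¹ * (Aℂ - z • 1)⁻¹) i j‖ ^ 2
      ≤ z.im⁻¹ ^ 2 * ((n : ℝ) * z.im⁻¹ ^ 2) :=
    (Stmt10Aux.prod_sq_bound hz Bℂ hHB _).trans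
      (mul_le_mul_of_nonneg_left (Stmt10Aux.res_sq_bound hz Aℂ hHA) (by positivity))
  have hsqrtP : Real.sqrt (∑ i, ∑ j, ‖((Bℂ - z • 1)⁻¹ * (Aℂ - z • 1)⁻¹) i j‖ ^ 2)
      ≤ Real.sqrt n * z.im⁻¹ ^ 2 := by
    have h1 := Real.sqrt_le_sqrt hSP
    have h2 : z.im⁻¹ ^ 2 * ((n : ℝ) * z.im⁻¹ ^ 2) = (Real.sqrt n * z.im⁻¹ ^ 2) ^ 2 := by
      rw [mul_pow, Real.sq_sqrt (le_of_lt hn')]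
      ring
    rw [h2, Real.sqrt_sq (by positivity)] at h1
    exact h1
  have hfrobnn : 0 ≤ frobNorm (A - B) := Real.sqrt_nonneg _
  have hmain : ‖Matrix.trace ((Aℂ - z • 1)⁻¹ - (Bℂ - z • 1)⁻¹)‖
      ≤ (Real.sqrt n * z.im⁻¹ ^ 2) * frobNorm (A - B) := by
    rw [htrace, ← hCnorm]
    exact (Stmt10Aux.trace_abs_bound _ _).trans
      (mul_le_mul_of_nonneg_right hsqrtP (Real.sqrt_nonneg _))
  have habs : ‖((n : ℂ)⁻¹ *
      Matrix.trace ((Aℂ - z • 1)⁻¹ - (Bℂ - z • 1)⁻¹))‖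
      = (n : ℝ)⁻¹ * ‖Matrix.trace ((Aℂ - z • 1)⁻¹ - (Bℂ - z • 1)⁻¹)‖ := by
    rw [norm_mul, norm_inv, Complex.norm_natCast]
  rw [habs]
  have hsq : (0 : ℝ) < Real.sqrt n := Real.sqrt_pos.mpr hn'
  have him : z.im ≠ 0 := ne_of_gt hz
  calc (n : ℝ)⁻¹ * ‖Matrix.trace ((Aℂ - z • 1)⁻¹ - (Bℂ - z • 1)⁻¹)‖
      ≤ (n : ℝ)⁻¹ * ((Real.sqrt n * z.im⁻¹ ^ 2) * frobNorm (A - B)) :=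
        mul_le_mul_of_nonneg_left hmain (by positivity)
    _ = frobNorm (A - B) / (Real.sqrt n * z.im ^ 2) := by
        have hnn : (n : ℝ) = Real.sqrt n * Real.sqrt n :=
          (Real.mul_self_sqrt (le_of_lt hn')).symm
        field_simp
        conv_rhs => rw [← Real.mul_self_sqrt (le_of_lt hn')]
        ring
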